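/- Assume φ₋ > φ₊, so that ρ₋ > ρ₊. The function 𝒟(r) = −√(G(r))/F'(r) is Lipschitz continuous on [ρ₊, ρ₋]. More precisely, 𝒟 is differentiable on (ρ₊, ρ₋], has a one-sided (right) derivative at ρ₊ equal to −√((b·F'(ρ₊) − a)/F'(ρ₊)), and lim_{r → ρ₊⁺} 𝒟'(r) = −√((b·F'(ρ₊) − a)/F'(ρ₊)), so that 𝒟' extends to a continuous (hence bounded) function on [ρ₊, ρ₋]. -/

import Mathlib

open MeasureTheory Set Filter Topology

noncomputable section

/-- `F(s) = ∫_{ρ₊}^s p'(τ)/(μ τ) dτ`. -/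
def Ffun (p : ℝ → ℝ) (μ ρp s : ℝ) : ℝ :=
  ∫ τ in ρp..s, deriv p τ / (μ * τ)

/-- `H(s) = b F(s) + b φ₊ - a s`. -/
def Hfun (p : ℝ → ℝ) (μ a b ρp φp s : ℝ) : ℝ :=
  b * Ffun p μ ρp s + b * φp - a * s

/-- `G(s) = ∫_{ρ₊}^s 2 F'(τ) H(τ) dτ`. -/
def Gfun (p : ℝ → ℝ) (μ a b ρp φp s : ℝ) : ℝ :=
  ∫ τ in ρp..s, 2 * (deriv p τ / (μ * τ)) * Hfun p μ a b ρp φp τ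

/-- `𝒟(r) = -√(G(r)) / F'(r)` with `F'(r) = p'(r)/(μ r)`. -/
def Dfun (p : ℝ → ℝ) (μ a b ρp φp r : ℝ) : ℝ :=
  - Real.sqrt (Gfun p μ a b ρp φp r) / (deriv p r / (μ * r))

/-- The structural condition `φ₋ - φ₊ + ∫₀^{ρ₊} p'(s)/(μ s) ds > 0`. -/
def CondPlus (p : ℝ → ℝ) (μ ρp φp φm : ℝ) : Prop :=
  ¬ IntegrableOn (fun s => deriv p s / (μ * s)) (Set.Ioo 0 ρp) ∨
    0 < φm - φp + ∫ s in Set.Ioo 0 ρp, deriv p s / (μ * s)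

/-- When `φ₋ > φ₊` (so `ρ₋ > ρ₊`), the map `𝒟(r) = -√(G(r))/F'(r)` is Lipschitz on
`[ρ₊, ρ₋]`: it is differentiable on `(ρ₊, ρ₋]`, has right derivative
`-√((bF'(ρ₊) - a)/F'(ρ₊))` at `ρ₊`, `𝒟'(r)` tends to this value as `r → ρ₊⁺`, and `𝒟'`
extends continuously to `[ρ₊, ρ₋]`. -/
theorem stmt8 (p : ℝ → ℝ) (μ a b ρp φp φm ρm : ℝ)
    (hμ : 0 < μ) (ha : 0 < a) (hb : 0 < b)
    (hp3 : ContDiffOn ℝ 3 p (Set.Ioi 0))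
    (hp' : ∀ ρ : ℝ, 0 < ρ → a * μ / b * ρ < deriv p ρ)
    (hρp : 0 < ρp) (hφp : 0 < φp) (hcomp : a * ρp = b * φp)
    (hφ : φp < φm) (hint : CondPlus p μ ρp φp φm)
    (hρm : 0 < ρm) (hFρm : Ffun p μ ρp ρm = φm - φp) :
    ρp < ρm ∧
    (∃ K : NNReal, LipschitzOnWith K (Dfun p μ a b ρp φp) (Set.Icc ρp ρm)) ∧
    (∀ r ∈ Set.Ioc ρp ρm, DifferentiableAt ℝ (Dfun p μ a b ρp φp) r) ∧
    HasDerivWithinAt (Dfun p μ a b ρp φp)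
      (- Real.sqrt ((b * (deriv p ρp / (μ * ρp)) - a) / (deriv p ρp / (μ * ρp))))
      (Set.Ici ρp) ρp ∧
    Tendsto (deriv (Dfun p μ a b ρp φp)) (nhdsWithin ρp (Set.Ioi ρp))
      (nhds (- Real.sqrt ((b * (deriv p ρp / (μ * ρp)) - a) / (deriv p ρp / (μ * ρp))))) ∧
    (∃ g : ℝ → ℝ, ContinuousOn g (Set.Icc ρp ρm) ∧
      Set.EqOn g (deriv (Dfun p μ a b ρp φp)) (Set.Ioc ρp ρm)) := by
  have hab : (0:ℝ) < a / b := div_pos ha hb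
  set f : ℝ → ℝ := fun τ => deriv p τ / (μ * τ) with hfdef
  -- positivity of f
  have hfpos : ∀ x ∈ Ioi (0:ℝ), a / b < f x := by
    intro x hx
    have hx0 : (0:ℝ) < x := hx
    have hμx : 0 < μ * x := mul_pos hμ hx0
    show a / b < deriv p x / (μ * x)
    rw [lt_div_iff₀ hμx]
    calc a / b * (μ * x) = a * μ / b * x := by ring
      _ < deriv p x := hp' x hx0
  have hf0 : ∀ x ∈ Ioi (0:ℝ), 0 < f x := fun x hx => lt_trans hab (hfpos x hx)
  -- smoothness of f
  have hdp2 : ContDiffOn ℝ 2 (deriv p) (Ioi 0) :=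
    hp3.deriv_of_isOpen isOpen_Ioi (by norm_num)
  have hfC1 : ContDiffOn ℝ 1 f (Ioi 0) := by
    apply ContDiffOn.div (hdp2.of_le (by norm_num))
    · exact contDiffOn_const.mul contDiffOn_id
    · intro x hx; exact ne_of_gt (mul_pos hμ hx)
  have hfdiff : ∀ x ∈ Ioi (0:ℝ), DifferentiableAt ℝ f x := fun x hx =>
    (hfC1.differentiableOn one_ne_zero).differentiableAt (isOpen_Ioi.mem_nhds hx)
  have hfcont : ContinuousOn f (Ioi 0) := hfC1.continuousOn
  have hfca : ∀ x ∈ Ioi (0:ℝ), ContinuousAt f x := fun x hx =>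
    hfcont.continuousAt (isOpen_Ioi.mem_nhds hx)
  have hf'cont : ContinuousOn (deriv f) (Ioi 0) :=
    hfC1.continuousOn_deriv_of_isOpen isOpen_Ioi le_rfl
  -- FTC for F
  have hsub : ∀ x ∈ Ioi (0:ℝ), uIcc ρp x ⊆ Ioi 0 := by
    intro x hx y hy
    exact lt_of_lt_of_le (lt_min hρp hx) hy.1
  have hFd : ∀ x ∈ Ioi (0:ℝ), HasDerivAt (Ffun p μ ρp) (f x) x := by
    intro x hx
    have hii : IntervalIntegrable f volume ρp x :=
      (hfcont.mono (hsub x hx)).intervalIntegrable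
    have hmeas : StronglyMeasurableAtFilter f (𝓝 x) :=
      hfcont.stronglyMeasurableAtFilter isOpen_Ioi x hx
    exact intervalIntegral.integral_hasDerivAt_right hii hmeas (hfca x hx)
  have hFρp : Ffun p μ ρp ρp = 0 := intervalIntegral.integral_same
  have hFcont : ContinuousOn (Ffun p μ ρp) (Ioi 0) := fun x hx =>
    ((hFd x hx).continuousAt).continuousWithinAt
  -- H
  have hHd : ∀ x ∈ Ioi (0:ℝ), HasDerivAt (Hfun p μ a b ρp φp) (b * f x - a) x := by
    intro x hx
    have h1 : HasDerivAt (fun s => b * Ffun p μ ρp s + b * φp - a * s) (b * f x - a * 1) x :=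
      (((hFd x hx).const_mul b).add_const (b * φp)).sub ((hasDerivAt_id x).const_mul a)
    have h2 : b * f x - a * 1 = b * f x - a := by ring
    rw [h2] at h1
    exact h1
  have hHρp : Hfun p μ a b ρp φp ρp = 0 := by
    simp only [Hfun, hFρp]
    rw [← hcomp]; ring
  have hIci : Ici ρp ⊆ Ioi (0:ℝ) := fun x hx => lt_of_lt_of_le hρp hx
  have hHcont : ContinuousOn (Hfun p μ a b ρp φp) (Ioi 0) := fun x hx =>
    ((hHd x hx).continuousAt).continuousWithinAt
  have hHpos : ∀ x ∈ Ioi ρp, 0 < Hfun p μ a b ρp φp x := by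
    have hmono : StrictMonoOn (Hfun p μ a b ρp φp) (Ici ρp) := by
      apply strictMonoOn_of_deriv_pos (convex_Ici ρp) (hHcont.mono hIci)
      intro x hx
      rw [interior_Ici] at hx
      have hx0 : x ∈ Ioi (0:ℝ) := hIci (mem_Ici.2 (le_of_lt hx))
      rw [(hHd x hx0).deriv]
      have h := (div_lt_iff₀ hb).mp (hfpos x hx0)
      linarith
    intro x hx
    have h := hmono self_mem_Ici (mem_Ici.2 (le_of_lt hx)) hx
    rw [hHρp] at h
    exact h
  -- F strict mono and ρp < ρm
  have hFmono : StrictMonoOn (Ffun p μ ρp) (Ioi 0) := by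
    apply strictMonoOn_of_deriv_pos (convex_Ioi 0) hFcont
    intro x hx
    rw [interior_Ioi] at hx
    rw [(hFd x hx).deriv]
    exact hf0 x hx
  have hρpm : ρp < ρm := by
    have h1 : Ffun p μ ρp ρp < Ffun p μ ρp ρm := by
      rw [hFρp, hFρm]; linarith
    exact (hFmono.lt_iff_lt (mem_Ioi.2 hρp) (mem_Ioi.2 hρm)).mp h1
  -- G
  have hGint_cont : ContinuousOn (fun τ => 2 * f τ * Hfun p μ a b ρp φp τ) (Ioi 0) :=
    (continuousOn_const.mul hfcont).mul hHcont
  have hGd : ∀ x ∈ Ioi (0:ℝ),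
      HasDerivAt (Gfun p μ a b ρp φp) (2 * f x * Hfun p μ a b ρp φp x) x := by
    intro x hx
    have hii : IntervalIntegrable (fun τ => 2 * f τ * Hfun p μ a b ρp φp τ) volume ρp x :=
      (hGint_cont.mono (hsub x hx)).intervalIntegrable
    have hmeas : StronglyMeasurableAtFilter (fun τ => 2 * f τ * Hfun p μ a b ρp φp τ) (𝓝 x) :=
      hGint_cont.stronglyMeasurableAtFilter isOpen_Ioi x hx
    exact intervalIntegral.integral_hasDerivAt_right hii hmeas
      (hGint_cont.continuousAt (isOpen_Ioi.mem_nhds hx))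
  have hGρp : Gfun p μ a b ρp φp ρp = 0 := intervalIntegral.integral_same
  have hGcont : ContinuousOn (Gfun p μ a b ρp φp) (Ioi 0) := fun x hx =>
    ((hGd x hx).continuousAt).continuousWithinAt
  have hGpos : ∀ x ∈ Ioi ρp, 0 < Gfun p μ a b ρp φp x := by
    have hmono : StrictMonoOn (Gfun p μ a b ρp φp) (Ici ρp) := by
      apply strictMonoOn_of_deriv_pos (convex_Ici ρp) (hGcont.mono hIci)
      intro x hx
      rw [interior_Ici] at hx
      rw [(hGd x (hIci (mem_Ici.2 (le_of_lt hx)))).deriv]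
      have h1 := hHpos x hx
      have h2 := hf0 x (hIci (mem_Ici.2 (le_of_lt hx)))
      nlinarith
    intro x hx
    have h := hmono self_mem_Ici (mem_Ici.2 (le_of_lt hx)) hx
    rw [hGρp] at h
    exact h
  -- derivative of D on Ioi ρp
  set E : ℝ → ℝ := fun r => -(Hfun p μ a b ρp φp r / Real.sqrt (Gfun p μ a b ρp φp r))
      + Real.sqrt (Gfun p μ a b ρp φp r) * deriv f r / (f r) ^ 2 with hEdef
  have hDd : ∀ r ∈ Ioi ρp, HasDerivAt (Dfun p μ a b ρp φp) (E r) r := by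
    intro r hr
    have hr0 : r ∈ Ioi (0:ℝ) := lt_trans hρp hr
    have hGr : 0 < Gfun p μ a b ρp φp r := hGpos r hr
    have hsq : Real.sqrt (Gfun p μ a b ρp φp r) ≠ 0 := ne_of_gt (Real.sqrt_pos.mpr hGr)
    have hfr : f r ≠ 0 := ne_of_gt (hf0 r hr0)
    have h1 : HasDerivAt (fun x => Real.sqrt (Gfun p μ a b ρp φp x))
        (2 * f r * Hfun p μ a b ρp φp r / (2 * Real.sqrt (Gfun p μ a b ρp φp r))) r :=
      (hGd r hr0).sqrt (ne_of_gt hGr)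
    have h2 := (h1.neg).div ((hfdiff r hr0).hasDerivAt) hfr
    have heq : (-(2 * f r * Hfun p μ a b ρp φp r / (2 * Real.sqrt (Gfun p μ a b ρp φp r))) * f r
        - -Real.sqrt (Gfun p μ a b ρp φp r) * deriv f r) / f r ^ 2 = E r := by
      simp only [hEdef]
      field_simp
      ring
    rw [Pi.neg_apply, heq] at h2
    exact h2
  have hfρp0 : (0:ℝ) < f ρp := hf0 ρp hρp
  -- limit of second term of E
  have hT2 : Tendsto (fun r => Real.sqrt (Gfun p μ a b ρp φp r) * deriv f r / f r ^ 2)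
      (𝓝[>] ρp) (𝓝 0) := by
    have h1 : ContinuousAt (Gfun p μ a b ρp φp) ρp := (hGd ρp hρp).continuousAt
    have h2 : ContinuousAt (deriv f) ρp := hf'cont.continuousAt (isOpen_Ioi.mem_nhds hρp)
    have h3 : ContinuousAt f ρp := hfca ρp hρp
    have hca : ContinuousAt (fun r => Real.sqrt (Gfun p μ a b ρp φp r) * deriv f r / f r ^ 2) ρp :=
      ((Real.continuous_sqrt.continuousAt.comp h1).mul h2).div (h3.pow 2)
        (pow_ne_zero 2 (ne_of_gt hfρp0))
    have h0 : Real.sqrt (Gfun p μ a b ρp φp ρp) * deriv f ρp / f ρp ^ 2 = 0 := by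
      rw [hGρp, Real.sqrt_zero, zero_mul, zero_div]
    have := hca.tendsto.mono_left (nhdsWithin_le_nhds (s := Ioi ρp))
    rwa [h0] at this
  -- l'Hopital for H^2/G
  have hHd2 : ∀ x ∈ Ioo ρp ρm, HasDerivAt (fun y => Hfun p μ a b ρp φp y ^ 2)
      (2 * Hfun p μ a b ρp φp x * (b * f x - a)) x := by
    intro x hx
    have hx0 : x ∈ Ioi (0:ℝ) := lt_trans hρp hx.1
    have h := (hHd x hx0).pow 2
    norm_num [pow_one] at h
    exact h
  have hGd2 : ∀ x ∈ Ioo ρp ρm, HasDerivAt (Gfun p μ a b ρp φp)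
      (2 * f x * Hfun p μ a b ρp φp x) x := fun x hx => hGd x (lt_trans hρp hx.1)
  have hg'ne : ∀ x ∈ Ioo ρp ρm, 2 * f x * Hfun p μ a b ρp φp x ≠ 0 := by
    intro x hx
    have h1 := hf0 x (lt_trans hρp hx.1)
    have h2 := hHpos x hx.1
    exact ne_of_gt (mul_pos (mul_pos two_pos h1) h2)
  have hHtends : Tendsto (fun x => Hfun p μ a b ρp φp x ^ 2) (𝓝[>] ρp) (𝓝 0) := by
    have h := (((hHd ρp hρp).continuousAt.pow 2).tendsto).mono_left
      (nhdsWithin_le_nhds (s := Ioi ρp))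
    rw [Pi.pow_apply, hHρp] at h
    simp at h
    exact h
  have hGtends : Tendsto (Gfun p μ a b ρp φp) (𝓝[>] ρp) (𝓝 0) := by
    have h := ((hGd ρp hρp).continuousAt.tendsto).mono_left (nhdsWithin_le_nhds (s := Ioi ρp))
    rwa [hGρp] at h
  have hdiv : Tendsto (fun x => (2 * Hfun p μ a b ρp φp x * (b * f x - a)) /
      (2 * f x * Hfun p μ a b ρp φp x)) (𝓝[>] ρp) (𝓝 ((b * f ρp - a) / f ρp)) := by
    have h3 : ContinuousAt f ρp := hfca ρp hρp
    have hq0 : ContinuousAt (fun x => (b * f x - a) / f x) ρp :=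
      ((continuousAt_const.mul h3).sub continuousAt_const).div h3 (ne_of_gt hfρp0)
    have hq : Tendsto (fun x => (b * f x - a) / f x) (𝓝[>] ρp) (𝓝 ((b * f ρp - a) / f ρp)) :=
      hq0.tendsto.mono_left (nhdsWithin_le_nhds (s := Ioi ρp))
    apply hq.congr'
    filter_upwards [Ioo_mem_nhdsGT_of_mem (left_mem_Ico.mpr hρpm)] with x hx
    have hH := ne_of_gt (hHpos x hx.1)
    have hf := ne_of_gt (hf0 x (lt_trans hρp hx.1))
    field_simp
  have hlhop : Tendsto (fun x => Hfun p μ a b ρp φp x ^ 2 / Gfun p μ a b ρp φp x) (𝓝[>] ρp)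
      (𝓝 ((b * f ρp - a) / f ρp)) :=
    HasDerivAt.lhopital_zero_right_on_Ioo hρpm hHd2 hGd2 hg'ne hHtends hGtends hdiv
  have hT1 : Tendsto (fun r => Hfun p μ a b ρp φp r / Real.sqrt (Gfun p μ a b ρp φp r))
      (𝓝[>] ρp) (𝓝 (Real.sqrt ((b * f ρp - a) / f ρp))) := by
    have h := Real.continuous_sqrt.continuousAt.tendsto.comp hlhop
    apply h.congr'
    filter_upwards [self_mem_nhdsWithin] with x hx
    have hH := hHpos x hx
    show Real.sqrt (Hfun p μ a b ρp φp x ^ 2 / Gfun p μ a b ρp φp x) = _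
    rw [Real.sqrt_div (sq_nonneg _), Real.sqrt_sq hH.le]
  have hEtends : Tendsto E (𝓝[>] ρp) (𝓝 (- Real.sqrt ((b * f ρp - a) / f ρp))) := by
    have h := (hT1.neg).add hT2
    rw [add_zero] at h
    exact h
  have hDtends : Tendsto (deriv (Dfun p μ a b ρp φp)) (𝓝[>] ρp)
      (𝓝 (- Real.sqrt ((b * f ρp - a) / f ρp))) := by
    apply hEtends.congr'
    filter_upwards [self_mem_nhdsWithin] with x hx
    exact ((hDd x hx).deriv).symm
  -- right derivative at ρp
  have hDcontρp : ContinuousAt (Dfun p μ a b ρp φp) ρp := by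
    have h1 : ContinuousAt (Gfun p μ a b ρp φp) ρp := (hGd ρp hρp).continuousAt
    exact ((Real.continuous_sqrt.continuousAt.comp h1).neg).div (hfca ρp hρp) (ne_of_gt hfρp0)
  have hRderiv : HasDerivWithinAt (Dfun p μ a b ρp φp)
      (- Real.sqrt ((b * f ρp - a) / f ρp)) (Ici ρp) ρp := by
    apply hasDerivWithinAt_Ici_of_tendsto_deriv (s := Ioi ρp)
    · intro x hx
      exact ((hDd x hx).differentiableAt).differentiableWithinAt
    · exact hDcontρp.continuousWithinAt
    · exact self_mem_nhdsWithin
    · exact hDtends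
  -- continuous extension g of deriv D
  set g : ℝ → ℝ := fun r => if r = ρp then - Real.sqrt ((b * f ρp - a) / f ρp)
    else deriv (Dfun p μ a b ρp φp) r with hgdef
  have hgρp : g ρp = - Real.sqrt ((b * f ρp - a) / f ρp) := if_pos rfl
  have hgeq : ∀ x ∈ Ioi ρp, g x = deriv (Dfun p μ a b ρp φp) x := fun x hx =>
    if_neg (ne_of_gt hx)
  have hEcontAt : ∀ x ∈ Ioi ρp, ContinuousAt E x := by
    intro x hx
    have hx0 : x ∈ Ioi (0:ℝ) := lt_trans hρp hx
    have h1 : ContinuousAt (Gfun p μ a b ρp φp) x := (hGd x hx0).continuousAt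
    have h2 : ContinuousAt (Hfun p μ a b ρp φp) x := (hHd x hx0).continuousAt
    have h3 : ContinuousAt f x := hfca x hx0
    have h4 : ContinuousAt (deriv f) x := hf'cont.continuousAt (isOpen_Ioi.mem_nhds hx0)
    have hsq : Real.sqrt (Gfun p μ a b ρp φp x) ≠ 0 :=
      ne_of_gt (Real.sqrt_pos.mpr (hGpos x hx))
    exact ((h2.div (Real.continuous_sqrt.continuousAt.comp h1) hsq).neg).add
      (((Real.continuous_sqrt.continuousAt.comp h1).mul h4).div (h3.pow 2)
        (pow_ne_zero 2 (ne_of_gt (hf0 x hx0))))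
  have hgcont : ContinuousOn g (Icc ρp ρm) := by
    intro x hx
    rcases eq_or_lt_of_le hx.1 with heq | hlt
    · subst heq
      have hsub2 : Icc ρp ρm ⊆ {ρp} ∪ Ioi ρp := by
        intro y hy
        rcases eq_or_lt_of_le hy.1 with h | h
        · exact Or.inl h.symm
        · exact Or.inr h
      have h1 : Tendsto g (𝓝[{ρp}] ρp) (𝓝 (g ρp)) := by
        rw [nhdsWithin_singleton]
        exact tendsto_pure_nhds g ρp
      have h2 : Tendsto g (𝓝[Ioi ρp] ρp) (𝓝 (g ρp)) := by
        rw [hgρp]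
        apply hDtends.congr'
        filter_upwards [self_mem_nhdsWithin] with y hy
        exact (hgeq y hy).symm
      have h3 : Tendsto g (𝓝[{ρp} ∪ Ioi ρp] ρp) (𝓝 (g ρp)) := by
        rw [nhdsWithin_union]
        exact tendsto_sup.2 ⟨h1, h2⟩
      exact h3.mono_left (nhdsWithin_mono _ hsub2)
    · have hev : E =ᶠ[𝓝 x] g := by
        filter_upwards [isOpen_Ioi.mem_nhds hlt] with y hy
        rw [hgeq y hy, (hDd y hy).deriv]
      exact ((hEcontAt x hlt).congr hev).continuousWithinAt
  -- Lipschitz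
  obtain ⟨C, hC⟩ := (isCompact_Icc (a := ρp) (b := ρm)).exists_bound_of_continuousOn hgcont
  have hudiff : UniqueDiffOn ℝ (Icc ρp ρm) := uniqueDiffOn_Icc hρpm
  have hDdiffOn : DifferentiableOn ℝ (Dfun p μ a b ρp φp) (Icc ρp ρm) := by
    intro x hx
    rcases eq_or_lt_of_le hx.1 with heq | hlt
    · subst heq
      exact (hRderiv.mono Icc_subset_Ici_self).differentiableWithinAt
    · exact ((hDd x hlt).differentiableAt).differentiableWithinAt
  have hdw : ∀ x ∈ Icc ρp ρm, derivWithin (Dfun p μ a b ρp φp) (Icc ρp ρm) x = g x := by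
    intro x hx
    rcases eq_or_lt_of_le hx.1 with heq | hlt
    · subst heq
      rw [hgρp]
      exact (hRderiv.mono Icc_subset_Ici_self).derivWithin (hudiff _ hx)
    · rw [hgeq x hlt]
      exact DifferentiableAt.derivWithin ((hDd x hlt).differentiableAt) (hudiff _ hx)
  have hKbound : ∀ x ∈ Icc ρp ρm,
      ‖derivWithin (Dfun p μ a b ρp φp) (Icc ρp ρm) x‖₊ ≤ Real.toNNReal C := by
    intro x hx
    rw [← NNReal.coe_le_coe, coe_nnnorm, Real.coe_toNNReal', hdw x hx]
    exact le_trans (hC x hx) (le_max_left _ _)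
  have hlip : LipschitzOnWith (Real.toNNReal C) (Dfun p μ a b ρp φp) (Icc ρp ρm) :=
    (convex_Icc ρp ρm).lipschitzOnWith_of_nnnorm_derivWithin_le hDdiffOn hKbound
  refine ⟨hρpm, ⟨Real.toNNReal C, hlip⟩, ?_, hRderiv, hDtends, ⟨g, hgcont, ?_⟩⟩
  · intro r hr
    exact (hDd r hr.1).differentiableAt
  · intro x hx
    exact hgeq x hx.1

end
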